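/- Let (X, 𝒳, μ, (T_g)) be an F₂-system, let X̃ = X × {a, b, a⁻¹, b⁻¹} with the product of μ and the uniform probability measure on the four-element set, and let P be the Markov operator P f̃(x,s) := (1/3) Σ_{s' ≠ s⁻¹} f̃(T_s⁻¹ x, s'). Let π_* f̃(x) := (1/4) Σ_s f̃(x,s) and π* f(x,s) := f(x). Then for every f ∈ L¹(X) and every n ≥ 1, the spherical average 𝒜_n f := (4·3^{n−1})⁻¹ Σ_{|g| = n} f ∘ T_g⁻¹ satisfies 𝒜_n f = π_* Pⁿ π* f. -/

import Mathlib

open MeasureTheory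

/-- The four-letter alphabet `{a, b, a⁻¹, b⁻¹}`. -/
inductive Letter : Type
  | a | b | a' | b'
  deriving DecidableEq

instance : Fintype Letter :=
  ⟨{.a, .b, .a', .b'}, fun x => by cases x <;> simp⟩

instance : MeasurableSpace Letter := ⊤

/-- Formal inverse of a letter. -/
def Letter.inv : Letter → Letter
  | .a => .a' | .a' => .a | .b => .b' | .b' => .b

/-- The group element of `F₂` corresponding to a letter. -/
def Letter.toF2 : Letter → FreeGroup (Fin 2)
  | .a => FreeGroup.of 0
  | .a' => (FreeGroup.of 0)⁻¹
  | .b => FreeGroup.of 1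
  | .b' => (FreeGroup.of 1)⁻¹

/-- The spherical averaging operator
`𝒜_n f(x) = (4·3^{n-1})⁻¹ Σ_{|g| = n} f(T_g⁻¹ x)`. -/
noncomputable def sphAvg {X : Type*} (T : FreeGroup (Fin 2) → X → X) (n : ℕ)
    (f : X → ℝ) (x : X) : ℝ :=
  (4 * 3 ^ (n - 1) : ℝ)⁻¹ *
    ∑ᶠ (g : FreeGroup (Fin 2)) (_ : FreeGroup.norm g = n), f (T g⁻¹ x)

/-- The Markov operator `P f̃(x,s) = (1/3) Σ_{s' ≠ s⁻¹} f̃(T_s⁻¹ x, s')` on the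
four-fold cover `X̃ = X × {a,b,a⁻¹,b⁻¹}`. -/
noncomputable def markovP {X : Type*} (T : FreeGroup (Fin 2) → X → X)
    (F : X × Letter → ℝ) : X × Letter → ℝ :=
  fun p => (3 : ℝ)⁻¹ *
    ∑ s' ∈ Finset.univ.filter (fun s' : Letter => s' ≠ p.2.inv),
      F (T p.2.toF2⁻¹ p.1, s')

/-- The pushforward `π_* f̃(x) = (1/4) Σ_s f̃(x,s)`. -/
noncomputable def pushDown {X : Type*} (F : X × Letter → ℝ) (x : X) : ℝ :=
  (4 : ℝ)⁻¹ * ∑ s : Letter, F (x, s)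


def Letter.toPair : Letter → Fin 2 × Bool
  | .a => (0, true) | .a' => (0, false) | .b => (1, true) | .b' => (1, false)

def Letter.ofPair : Fin 2 × Bool → Letter :=
  fun p => if p.1 = 0 then (if p.2 then .a else .a') else (if p.2 then .b else .b')

lemma Letter.toPair_ofPair : ∀ p, (Letter.ofPair p).toPair = p := by decide

lemma Letter.toPair_injective : Function.Injective Letter.toPair := by decide

lemma Letter.toF2_eq (s : Letter) : s.toF2 = FreeGroup.mk [s.toPair] := by
  cases s <;> simp [Letter.toF2, Letter.toPair, FreeGroup.of, FreeGroup.inv_mk, FreeGroup.invRev]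

lemma Letter.inv_invol (s : Letter) : s.inv.inv = s := by cases s <;> rfl

lemma Letter.ne_inv_iff (s s' : Letter) :
    s' ≠ s.inv ↔ ¬((s.toPair).1 = (s'.toPair).1 ∧ (s.toPair).2 = !(s'.toPair).2) := by
  revert s s'; decide

/-- The relation on pairs meaning "no cancellation". -/
def NC (p q : Fin 2 × Bool) : Prop := ¬(p.1 = q.1 ∧ p.2 = !q.2)

lemma reduce_eq_self_of_chain : ∀ {L : List (Fin 2 × Bool)},
    List.Chain' NC L → FreeGroup.reduce L = L := by
  intro L
  induction L with
  | nil => intro; rfl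
  | cons x L ih =>
    intro h
    rw [FreeGroup.reduce.cons, ih h.tail]
    cases L with
    | nil => rfl
    | cons y t =>
      have hxy : NC x y := (List.isChain_cons_cons.1 h).1
      simp only [NC] at hxy
      simp [hxy]

lemma chain_of_reduce_eq_self : ∀ {L : List (Fin 2 × Bool)},
    FreeGroup.reduce L = L → List.Chain' NC L := by
  intro L
  induction L with
  | nil => intro; exact List.isChain_nil
  | cons x L ih =>
    intro h
    rw [FreeGroup.reduce.cons] at h
    rcases hr : FreeGroup.reduce L with _ | ⟨y, t⟩
    · rw [hr] at h
      simp only at h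
      have hL : L = [] := by
        have := congrArg List.tail h
        simpa using this.symm
      subst hL; exact List.isChain_singleton x
    · rw [hr] at h
      by_cases hc : x.1 = y.1 ∧ x.2 = !y.2
      · simp only [hc, if_true] at h
        exfalso
        have h1 := congrArg List.length h
        have h2 : t.length + 1 ≤ L.length := by
          have := congrArg List.length hr
          have hred : (FreeGroup.reduce L).length ≤ L.length :=
            List.Sublist.length_le (FreeGroup.Red.sublist FreeGroup.reduce.red)
          rw [hr] at hred; simpa using hred
        simp at h1; omega
      · simp only [hc, if_false] at h
        have hL : L = y :: t := by
          have := congrArg List.tail h; simpa using this.symm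
        have : FreeGroup.reduce L = L := by rw [hr, hL]
        have hchain := ih this
        rw [hL]
        exact List.isChain_cons_cons.2 ⟨hc, hL ▸ hchain⟩

/-- `wordOf l` is the product of the letters of `l` in `F₂`. -/
def wordOf (l : List Letter) : FreeGroup (Fin 2) := FreeGroup.mk (l.map Letter.toPair)

/-- Reduced lists of letters. -/
def Good (l : List Letter) : Prop := List.Chain' (fun s s' => s' ≠ s.inv) l

lemma good_iff_chain (l : List Letter) :
    Good l ↔ List.Chain' NC (l.map Letter.toPair) := by
  rw [Good]; unfold List.Chain'; rw [List.isChain_map]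
  constructor <;> exact fun h => h.imp (by
    intro s s'
    have := Letter.ne_inv_iff s s'
    simp only [NC]
    tauto)

lemma toWord_wordOf {l : List Letter} (hl : Good l) :
    (wordOf l).toWord = l.map Letter.toPair := by
  rw [wordOf, FreeGroup.toWord_mk, reduce_eq_self_of_chain ((good_iff_chain l).1 hl)]

lemma norm_wordOf {l : List Letter} (hl : Good l) :
    FreeGroup.norm (wordOf l) = l.length := by
  rw [FreeGroup.norm, toWord_wordOf hl, List.length_map]

lemma wordOf_injOn {l1 l2 : List Letter} (h1 : Good l1) (h2 : Good l2)
    (h : wordOf l1 = wordOf l2) : l1 = l2 := by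
  have := congrArg FreeGroup.toWord h
  rw [toWord_wordOf h1, toWord_wordOf h2] at this
  exact List.map_injective_iff.2 Letter.toPair_injective this

lemma wordOf_cons (s : Letter) (l : List Letter) :
    wordOf (s :: l) = s.toF2 * wordOf l := by
  rw [wordOf, List.map_cons, Letter.toF2_eq, wordOf, FreeGroup.mul_mk]
  rfl

lemma surj_norm {g : FreeGroup (Fin 2)} {n : ℕ} (h : FreeGroup.norm g = n) :
    ∃ l : List Letter, Good l ∧ l.length = n ∧ wordOf l = g := by
  refine ⟨g.toWord.map Letter.ofPair, ?_, ?_, ?_⟩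
  · rw [good_iff_chain, List.map_map]
    have : (Letter.toPair ∘ Letter.ofPair) = id := funext Letter.toPair_ofPair
    rw [this, List.map_id]
    exact chain_of_reduce_eq_self (FreeGroup.reduce_toWord g)
  · rw [List.length_map]; exact h
  · rw [wordOf, List.map_map]
    have : (Letter.toPair ∘ Letter.ofPair) = id := funext Letter.toPair_ofPair
    rw [this, List.map_id, FreeGroup.mk_toWord]

/-- Reduced words of length `n+1` starting with a given letter, as a finset of lists. -/
def WW : ℕ → Letter → Finset (List Letter)
  | 0, s => {[s]}
  | (n+1), s => (Finset.univ.filter (fun s' => s' ≠ s.inv)).biUnion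
      (fun s' => (WW n s').image (s :: ·))

lemma mem_WW : ∀ (n : ℕ) (s : Letter) (l : List Letter),
    l ∈ WW n s ↔ l.length = n + 1 ∧ Good l ∧ l.head? = some s := by
  intro n
  induction n with
  | zero =>
    intro s l
    simp only [WW, Finset.mem_singleton]
    constructor
    · rintro rfl; exact ⟨rfl, List.isChain_singleton s, rfl⟩
    · rintro ⟨h1, _, h3⟩
      obtain ⟨x, rfl⟩ := List.length_eq_one_iff.1 h1
      simpa using h3
  | succ n ih =>
    intro s l
    simp only [WW, Finset.mem_biUnion, Finset.mem_filter, Finset.mem_univ, true_and,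
      Finset.mem_image]
    constructor
    · rintro ⟨s', hs', l', hl', rfl⟩
      obtain ⟨h1, h2, h3⟩ := (ih s' l').1 hl'
      refine ⟨by simp [h1], ?_, rfl⟩
      cases l' with
      | nil => simp at h1
      | cons y t =>
        have : y = s' := by simpa using h3
        subst this
        exact List.isChain_cons_cons.2 ⟨hs', h2⟩
    · rintro ⟨h1, h2, h3⟩
      cases l with
      | nil => simp at h3
      | cons y l' =>
        have : y = s := by simpa using h3
        subst this
        cases l' with
        | nil => simp at h1
        | cons z t =>
          have hc := List.isChain_cons_cons.1 h2
          exact ⟨z, hc.1, z :: t, (ih z (z :: t)).2 ⟨by simpa using h1, hc.2, rfl⟩, rfl⟩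

lemma length_mem_WW {n s l} (h : l ∈ WW n s) : l.length = n + 1 := ((mem_WW n s l).1 h).1
lemma good_mem_WW {n s l} (h : l ∈ WW n s) : Good l := ((mem_WW n s l).1 h).2.1
lemma head_mem_WW {n s l} (h : l ∈ WW n s) : l.head? = some s := ((mem_WW n s l).1 h).2.2

lemma card_filter_ne_inv (s : Letter) :
    (Finset.univ.filter (fun s' : Letter => s' ≠ s.inv)).card = 3 := by
  cases s <;> decide

lemma markov_iterate {X : Type*} (T : FreeGroup (Fin 2) → X → X)
    (hTmul : ∀ g h : FreeGroup (Fin 2), T (g * h) = T g ∘ T h)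
    (f : X → ℝ) : ∀ (n : ℕ) (x : X) (s : Letter),
    (markovP T)^[n + 1] (fun p => f p.1) (x, s) =
      ((3 : ℝ) ^ n)⁻¹ * ∑ l ∈ WW n s, f (T (wordOf l)⁻¹ x) := by
  intro n
  induction n with
  | zero =>
    intro x s
    rw [zero_add, Function.iterate_one]
    have hW : WW 0 s = {[s]} := rfl
    simp only [markovP, hW, Finset.sum_singleton, pow_zero, inv_one, one_mul, wordOf,
      List.map_cons, List.map_nil, Letter.toF2_eq, Finset.sum_const, card_filter_ne_inv,
      nsmul_eq_mul]
    ring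
  | succ n ih =>
    intro x s
    rw [Function.iterate_succ_apply']
    simp only [markovP]
    have key : ∀ s' ∈ Finset.univ.filter (fun s' : Letter => s' ≠ s.inv),
        (markovP T)^[n + 1] (fun p => f p.1) (T (Letter.toF2 s)⁻¹ x, s') =
          ((3 : ℝ) ^ n)⁻¹ * ∑ l ∈ WW n s', f (T (wordOf (s :: l))⁻¹ x) := by
      intro s' _
      rw [ih]
      congr 1
      refine Finset.sum_congr rfl (fun l _ => ?_)
      rw [wordOf_cons, mul_inv_rev, hTmul]
      rfl
    rw [Finset.sum_congr rfl key]
    have hdisj : (Set.PairwiseDisjoint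
        ↑(Finset.univ.filter (fun s' : Letter => s' ≠ s.inv))
        (fun s' => (WW n s').image (s :: ·))) := by
      intro s1 _ s2 _ hne
      simp only [Function.onFun]
      rw [Finset.disjoint_left]
      rintro l h1 h2
      obtain ⟨l1, hl1, rfl⟩ := Finset.mem_image.1 h1
      obtain ⟨l2, hl2, heq⟩ := Finset.mem_image.1 h2
      have : l2 = l1 := by simpa using heq
      subst this
      have e1 := head_mem_WW hl1
      have e2 := head_mem_WW hl2
      rw [e1] at e2
      exact hne (Option.some.inj e2)
    have : ∑ l ∈ WW (n + 1) s, f (T (wordOf l)⁻¹ x) =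
        ∑ s' ∈ Finset.univ.filter (fun s' : Letter => s' ≠ s.inv),
          ∑ l ∈ WW n s', f (T (wordOf (s :: l))⁻¹ x) := by
      rw [show WW (n+1) s = (Finset.univ.filter (fun s' : Letter => s' ≠ s.inv)).biUnion
        (fun s' => (WW n s').image (s :: ·)) from rfl, Finset.sum_biUnion hdisj]
      refine Finset.sum_congr rfl (fun s' _ => ?_)
      rw [Finset.sum_image (fun a _ b _ h => by simpa using h)]
    rw [this, Finset.mul_sum, Finset.mul_sum]
    refine Finset.sum_congr rfl (fun s' _ => ?_)
    rw [← mul_assoc, pow_succ]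
    ring_nf

/-- Bufetov's identity: the spherical average `𝒜_n f` equals `π_* Pⁿ π^* f`, where `P`
is the Markov operator on the four-fold cover `X̃ = X × {a,b,a⁻¹,b⁻¹}` and
`π^* f(x,s) = f(x)`. -/
theorem sphAvg_eq_markov_iterate {X : Type*} [MeasurableSpace X] (μ : Measure X)
    [IsFiniteMeasure μ] (T : FreeGroup (Fin 2) → X → X)
    (hT1 : T 1 = id) (hTmul : ∀ g h : FreeGroup (Fin 2), T (g * h) = T g ∘ T h)
    (hTmp : ∀ g : FreeGroup (Fin 2), MeasurePreserving (T g) μ μ)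
    (f : X → ℝ) (hf : Integrable f μ) (n : ℕ) (hn : 1 ≤ n) :
    sphAvg T n f = pushDown ((markovP T)^[n] (fun p => f p.1)) := by
  obtain ⟨m, rfl⟩ : ∃ m, n = m + 1 := ⟨n - 1, (Nat.succ_pred_eq_of_pos hn).symm⟩
  funext x
  set S : Finset (FreeGroup (Fin 2)) :=
    Finset.univ.biUnion (fun s : Letter => (WW m s).image wordOf) with hS
  have hiff : ∀ g : FreeGroup (Fin 2), FreeGroup.norm g = m + 1 ↔ g ∈ S := by
    intro g
    constructor
    · intro h
      obtain ⟨l, hg, hlen, rfl⟩ := surj_norm h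
      cases l with
      | nil => simp at hlen
      | cons s t =>
        exact Finset.mem_biUnion.2 ⟨s, Finset.mem_univ s,
          Finset.mem_image.2 ⟨s :: t, (mem_WW m s _).2 ⟨by simpa using hlen, hg, rfl⟩, rfl⟩⟩
    · intro h
      obtain ⟨s, _, h⟩ := Finset.mem_biUnion.1 h
      obtain ⟨l, hl, rfl⟩ := Finset.mem_image.1 h
      rw [norm_wordOf (good_mem_WW hl), length_mem_WW hl]
  have hdisjS : Set.PairwiseDisjoint ↑(Finset.univ : Finset Letter)
      (fun s => (WW m s).image wordOf) := by
    intro s1 _ s2 _ hne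
    simp only [Function.onFun]
    rw [Finset.disjoint_left]
    rintro g h1 h2
    obtain ⟨l1, hl1, rfl⟩ := Finset.mem_image.1 h1
    obtain ⟨l2, hl2, heq⟩ := Finset.mem_image.1 h2
    have : l2 = l1 := wordOf_injOn (good_mem_WW hl2) (good_mem_WW hl1) heq
    subst this
    have e1 := head_mem_WW hl1
    have e2 := head_mem_WW hl2
    rw [e1] at e2
    exact hne (Option.some.inj e2)
  rw [sphAvg, pushDown]
  rw [finsum_cond_eq_sum_of_cond_iff _ (fun {g} _ => hiff g)]
  rw [hS, Finset.sum_biUnion hdisjS]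
  have himg : ∀ s : Letter, ∑ g ∈ (WW m s).image wordOf, f (T g⁻¹ x) =
      ∑ l ∈ WW m s, f (T (wordOf l)⁻¹ x) := by
    intro s
    exact Finset.sum_image (fun a ha b hb h =>
      wordOf_injOn (good_mem_WW ha) (good_mem_WW hb) h)
  have hmk : ∀ s : Letter, (markovP T)^[m + 1] (fun p => f p.1) (x, s) =
      ((3 : ℝ) ^ m)⁻¹ * ∑ l ∈ WW m s, f (T (wordOf l)⁻¹ x) :=
    fun s => markov_iterate T hTmul f m x s
  rw [Finset.sum_congr rfl (fun s _ => himg s), Finset.sum_congr rfl (fun s _ => hmk s)]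
  simp only [Nat.add_sub_cancel, Finset.mul_sum]
  refine Finset.sum_congr rfl (fun s _ => Finset.sum_congr rfl (fun l _ => ?_))
  rw [mul_inv]
  ring
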